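/- Let k ≥ 2 and let s_A be a binary sequence of period N_A = 2^{2k} - 1 whose autocorrelation satisfies C_{s_A}(τ) = -1 for nonzero τ divisible by 2^k + 1 and C_{s_A}(τ) = 3 otherwise (τ ≠ 0). Then the 2-adic complexity satisfies Φ_2(s_A) ≥ log_2(2^{N_A} - 1) - 2·log_2(2^{k-1} - 1) > (2^{2k} - 1) - 1 - 2(k - 1) > N_A / 2. -/

import Mathlib

-- sign lemma
lemma sgn_mul (a b : ℕ) (ha : a ≤ 1) (hb : b ≤ 1) :
    (1 - 2*(a:ℤ)) * (1 - 2*(b:ℤ)) = (-1)^(b + a) := by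
  interval_cases a <;> interval_cases b <;> decide

lemma key_dvd (k N : ℕ) (hk : 2 ≤ k) (hN : N = 2 ^ (2 * k) - 1)
    (s : ℕ → ℕ) (hs : ∀ i, s i ≤ 1)
    (hauto : ∀ τ, 0 < τ → τ < N →
      ((τ % (2 ^ k + 1) = 0 →
          (∑ i ∈ Finset.range N, (-1 : ℤ) ^ (s i + s ((i + τ) % N))) = -1) ∧
        (τ % (2 ^ k + 1) ≠ 0 →
          (∑ i ∈ Finset.range N, (-1 : ℤ) ^ (s i + s ((i + τ) % N))) = 3))) :
    Nat.gcd (∑ i ∈ Finset.range N, s i * 2 ^ i) (2 ^ N - 1) ∣ (2 ^ (k - 1) - 1) ^ 2 := by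
  have ha4 : 4 ≤ 2 ^ k := by
    calc (4:ℕ) = 2^2 := rfl
    _ ≤ 2^k := Nat.pow_le_pow_right (by norm_num) hk
  have hNval : N = 2^k * 2^k - 1 := by rw [hN, two_mul, pow_add]
  have hN15 : 15 ≤ N := by
    have := Nat.mul_le_mul ha4 ha4; omega
  set m : ℕ := 2^k + 1 with hm
  set n : ℕ := 2^k - 1 with hn
  have hmn : N = m * n := by
    have h1 : 1 ≤ 2^k := by omega
    zify [h1, hNval, Nat.one_le_two_pow]
    push_cast [hm, hn, hNval, Nat.cast_sub h1, Nat.cast_sub (by nlinarith : 1 ≤ 2^k * 2^k)]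
    ring
  set M : ℕ := 2^N - 1 with hM
  have h2Nge : 2^N ≥ 2^15 := Nat.pow_le_pow_right (by norm_num) hN15
  have hM1 : 1 < M := by
    have h215 : (2:ℕ)^15 = 32768 := by norm_num
    omega
  haveI : NeZero M := ⟨by omega⟩
  set S : ℕ := ∑ i ∈ Finset.range N, s i * 2 ^ i with hS
  set g : ℕ := Nat.gcd S M with hg
  have hgM : g ∣ M := Nat.gcd_dvd_right _ _
  have hgS : g ∣ S := Nat.gcd_dvd_left _ _
  -- ZMod M facts
  have h2N : (2 : ZMod M)^N = 1 := by
    have h0 : ((M : ℕ) : ZMod M) = 0 := ZMod.natCast_self _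
    have h1 : 1 ≤ 2^N := Nat.one_le_two_pow
    rw [hM, Nat.cast_sub h1] at h0
    push_cast at h0
    linear_combination h0
  have hpow : ∀ x, (2 : ZMod M)^x = 2^(x % N) := by
    intro x
    conv_lhs => rw [← Nat.div_add_mod x N]
    rw [pow_add, pow_mul, h2N, one_pow, one_mul]
  classical
  have hN0 : 0 < N := by omega
  have hn0 : 0 < n := by omega
  have hm0 : 0 < m := by omega
  set U : ℕ → ZMod M := fun i => 1 - 2 * (s i : ZMod M) with hU
  set T : ℤ := ∑ i ∈ Finset.range N, (1 - 2*(s i : ℤ)) * 2^i with hT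
  set T' : ℤ := ∑ j ∈ Finset.range N, (1 - 2*(s j : ℤ)) * 2^(N-j) with hT'
  set G : ℤ := ∑ j ∈ Finset.range n, (2:ℤ)^(m*j) with hG
  set R : ℤ := (N:ℤ) + 1 - 4*G with hR
  set Cf : ℕ → ℤ := fun τ => ∑ j ∈ Finset.range N, (-1:ℤ)^(s j + s ((j+τ) % N)) with hCf
  -- product of signs
  have hUU : ∀ a b : ℕ, U a * U b = ((-1 : ZMod M))^(s b + s a) := by
    intro a b
    have h := sgn_mul (s a) (s b) (hs a) (hs b)
    calc U a * U b = (((1 - 2*(s a:ℤ)) * (1 - 2*(s b:ℤ)) : ℤ) : ZMod M) := by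
          push_cast; ring
      _ = _ := by rw [h]; push_cast; ring
  -- geometric sum vanishes
  have hgeom : ∑ i ∈ Finset.range N, (2:ZMod M)^i = 0 := by
    have h := geom_sum_mul (2:ZMod M) N
    rw [h2N] at h
    norm_num at h
    exact h
  -- main ZMod identity
  have hzmod : (∑ i ∈ Finset.range N, U i * (2:ZMod M)^i) *
      (∑ j ∈ Finset.range N, U j * (2:ZMod M)^(N-j)) =
      (N : ZMod M) + 1 - 4 * ∑ j ∈ Finset.range n, ((2:ZMod M)^m)^j := by
    have step1 : (∑ i ∈ Finset.range N, U i * (2:ZMod M)^i) *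
        (∑ j ∈ Finset.range N, U j * (2:ZMod M)^(N-j)) =
        ∑ j ∈ Finset.range N, ∑ i ∈ Finset.range N, U i * U j * 2^((i + (N-j)) % N) := by
      rw [Finset.sum_mul_sum, Finset.sum_comm]
      refine Finset.sum_congr rfl fun j hj => Finset.sum_congr rfl fun i hi => ?_
      rw [← hpow, pow_add]
      ring
    have step2 : ∀ j ∈ Finset.range N,
        ∑ i ∈ Finset.range N, U i * U j * (2:ZMod M)^((i + (N-j)) % N) =
        ∑ τ ∈ Finset.range N, U ((j+τ) % N) * U j * 2^τ := by
      intro j hj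
      rw [Finset.mem_range] at hj
      refine (Finset.sum_nbij' (fun τ => (j + τ) % N) (fun i => (i + (N - j)) % N)
        ?_ ?_ ?_ ?_ ?_).symm
      · intro a ha; exact Finset.mem_range.mpr (Nat.mod_lt _ hN0)
      · intro a ha; exact Finset.mem_range.mpr (Nat.mod_lt _ hN0)
      · intro a ha
        rw [Finset.mem_range] at ha
        show ((j + a) % N + (N - j)) % N = a
        rw [Nat.mod_add_mod]
        have e : j + a + (N - j) = a + N := by omega
        rw [e, Nat.add_mod_right]
        exact Nat.mod_eq_of_lt ha
      · intro a ha
        rw [Finset.mem_range] at ha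
        show (j + (a + (N - j)) % N) % N = a
        rw [Nat.add_mod_mod]
        have e : j + (a + (N - j)) = a + N := by omega
        rw [e, Nat.add_mod_right]
        exact Nat.mod_eq_of_lt ha
      · intro a ha
        rw [Finset.mem_range] at ha
        show U ((j + a) % N) * U j * (2:ZMod M) ^ a
            = U ((j + a) % N) * U j * 2 ^ (((j + a) % N + (N - j)) % N)
        have e : ((j + a) % N + (N - j)) % N = a := by
          rw [Nat.mod_add_mod]
          have e2 : j + a + (N - j) = a + N := by omega
          rw [e2, Nat.add_mod_right]
          exact Nat.mod_eq_of_lt ha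
        rw [e]
    have step3 : ∑ j ∈ Finset.range N, ∑ τ ∈ Finset.range N, U ((j+τ) % N) * U j * (2:ZMod M)^τ
        = ∑ τ ∈ Finset.range N, (Cf τ : ZMod M) * 2^τ := by
      rw [Finset.sum_comm]
      refine Finset.sum_congr rfl fun τ hτ => ?_
      rw [← Finset.sum_mul]
      congr 1
      rw [hCf]
      push_cast
      exact Finset.sum_congr rfl fun j _ => hUU _ _
    have hC0 : Cf 0 = (N:ℤ) := by
      show ∑ j ∈ Finset.range N, (-1:ℤ)^(s j + s ((j + 0) % N)) = (N:ℤ)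
      have : ∀ j ∈ Finset.range N, (-1:ℤ)^(s j + s ((j+0) % N)) = 1 := by
        intro j hj
        rw [Finset.mem_range] at hj
        rw [add_zero, Nat.mod_eq_of_lt hj]
        exact Even.neg_one_pow ⟨s j, rfl⟩
      rw [Finset.sum_congr rfl this]
      simp
    have hCτ : ∀ τ ∈ Finset.Ico 1 N, Cf τ = if m ∣ τ then -1 else 3 := by
      intro τ hτ
      rw [Finset.mem_Ico] at hτ
      obtain ⟨h1, h2⟩ := hauto τ (by omega) hτ.2
      by_cases hd : m ∣ τ
      · rw [if_pos hd]; exact h1 (Nat.mod_eq_zero_of_dvd hd)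
      · rw [if_neg hd]; exact h2 (fun h => hd (Nat.dvd_of_mod_eq_zero h))
    have hsplit : ∑ τ ∈ Finset.range N, (Cf τ : ZMod M) * 2^τ =
        (N : ZMod M) + ∑ τ ∈ Finset.Ico 1 N, ((if m ∣ τ then (-1:ℤ) else 3) : ZMod M) * 2^τ := by
      rw [Finset.range_eq_Ico, Finset.sum_eq_sum_Ico_succ_bot hN0]
      rw [hC0]
      push_cast
      rw [pow_zero, mul_one]
      congr 1
      refine Finset.sum_congr rfl fun τ hτ => ?_
      rw [hCτ τ hτ]
      split_ifs <;> push_cast <;> ring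
    have hIcogeom : ∑ τ ∈ Finset.Ico 1 N, (2:ZMod M)^τ = -1 := by
      have h := hgeom
      rw [Finset.range_eq_Ico, Finset.sum_eq_sum_Ico_succ_bot hN0] at h
      rw [pow_zero] at h
      linear_combination h
    have hite : ∑ τ ∈ Finset.Ico 1 N, ((if m ∣ τ then (-1:ℤ) else 3) : ZMod M) * 2^τ =
        3 * (∑ τ ∈ Finset.Ico 1 N, (2:ZMod M)^τ) -
        ∑ τ ∈ Finset.Ico 1 N, (if m ∣ τ then (4:ZMod M) * 2^τ else 0) := by
      rw [Finset.mul_sum, ← Finset.sum_sub_distrib]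
      refine Finset.sum_congr rfl fun τ hτ => ?_
      split_ifs <;> push_cast <;> ring
    have hfil : ∑ τ ∈ Finset.Ico 1 N, (if m ∣ τ then (4:ZMod M) * 2^τ else 0) =
        ∑ j ∈ Finset.Ico 1 n, 4 * ((2:ZMod M)^m)^j := by
      rw [← Finset.sum_filter]
      refine Finset.sum_nbij' (fun τ => τ / m) (fun j => m * j) ?_ ?_ ?_ ?_ ?_
      · intro a ha
        rw [Finset.mem_filter, Finset.mem_Ico] at ha
        obtain ⟨⟨ha1, ha2⟩, had⟩ := ha
        rw [Finset.mem_Ico]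
        constructor
        · exact (Nat.one_le_div_iff hm0).mpr (Nat.le_of_dvd (by omega) had)
        · rw [Nat.div_lt_iff_lt_mul hm0, mul_comm n m, ← hmn]
          omega
      · intro a ha
        rw [Finset.mem_Ico] at ha
        rw [Finset.mem_filter, Finset.mem_Ico]
        refine ⟨⟨?_, ?_⟩, dvd_mul_right m a⟩
        · exact Nat.one_le_iff_ne_zero.mpr (Nat.mul_ne_zero (by omega) (by omega))
        · calc m * a < m * n := (Nat.mul_lt_mul_left hm0).mpr ha.2
            _ = N := hmn.symm
      · intro a ha
        rw [Finset.mem_filter] at ha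
        exact Nat.mul_div_cancel' ha.2
      · intro a ha
        exact Nat.mul_div_cancel_left a hm0
      · intro a ha
        rw [Finset.mem_filter] at ha
        rw [← pow_mul, Nat.mul_div_cancel' ha.2]
    have hIcoG : ∑ j ∈ Finset.Ico 1 n, (4:ZMod M) * ((2:ZMod M)^m)^j =
        4 * (∑ j ∈ Finset.range n, ((2:ZMod M)^m)^j) - 4 := by
      rw [Finset.mul_sum, Finset.range_eq_Ico, Finset.sum_eq_sum_Ico_succ_bot hn0]
      rw [pow_zero, mul_one]
      ring
    rw [step1, Finset.sum_congr rfl step2, step3, hsplit, hite, hfil, hIcoG, hIcogeom]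
    ring
  -- transfer to ℤ
  have hMdvd : (M:ℤ) ∣ T * T' - R := by
    rw [← ZMod.intCast_zmod_eq_zero_iff_dvd]
    push_cast
    have hTc : ((T:ℤ) : ZMod M) = ∑ i ∈ Finset.range N, U i * (2:ZMod M)^i := by
      rw [hT]; push_cast; rfl
    have hTc' : ((T':ℤ) : ZMod M) = ∑ j ∈ Finset.range N, U j * (2:ZMod M)^(N-j) := by
      rw [hT']; push_cast; rfl
    have hGc : ((G:ℤ) : ZMod M) = ∑ j ∈ Finset.range n, ((2:ZMod M)^m)^j := by
      rw [hG]; push_cast [pow_mul]; rfl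
    rw [hTc, hTc', hR]
    push_cast
    rw [hGc, hzmod]
    ring
  -- integer divisibility chain
  have hMZ : ((M:ℕ):ℤ) = 2^N - 1 := by
    rw [hM, Nat.cast_sub Nat.one_le_two_pow]; push_cast; ring
  have hNZ : ((N:ℕ):ℤ) = 2^(2*k) - 1 := by
    rw [hN, Nat.cast_sub Nat.one_le_two_pow]; push_cast; ring
  have hnZ : ((n:ℕ):ℤ) = 2^k - 1 := by
    rw [hn, Nat.cast_sub Nat.one_le_two_pow]; push_cast; ring
  have hgeomZ : (∑ i ∈ Finset.range N, (2:ℤ)^i) = (M:ℤ) := by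
    have h := geom_sum_mul (2:ℤ) N
    norm_num at h
    rw [h, hMZ]
  have hTS : T = (M:ℤ) - 2 * (S:ℤ) := by
    have h1 : T = (∑ i ∈ Finset.range N, (2:ℤ)^i) - 2 * ∑ i ∈ Finset.range N, (s i : ℤ) * 2^i := by
      rw [hT, Finset.mul_sum, ← Finset.sum_sub_distrib]
      exact Finset.sum_congr rfl fun i _ => by ring
    rw [h1, hgeomZ, hS]
    push_cast
    ring
  have hgZM : (g:ℤ) ∣ (M:ℤ) := Int.natCast_dvd_natCast.mpr hgM
  have hgT : (g:ℤ) ∣ T := by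
    rw [hTS]
    exact dvd_sub hgZM ((Int.natCast_dvd_natCast.mpr hgS).mul_left 2)
  have hgR : (g:ℤ) ∣ R := by
    have h3 : (g:ℤ) ∣ T * T' - R := hgZM.trans hMdvd
    have h4 := dvd_sub (hgT.mul_right T') h3
    simpa using h4
  have hGeq : ((2:ℤ)^m - 1) * G = (M:ℤ) := by
    rw [hG]
    simp only [pow_mul]
    rw [mul_comm, geom_sum_mul, ← pow_mul, ← hmn, hMZ]
  have hg2 : g ∣ 2^(2*k) * (2^m - 1) := by
    have h4 : (g:ℤ) ∣ ((2:ℤ)^m - 1) * R := hgR.mul_left _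
    have h5 : ((2:ℤ)^m - 1) * R = 2^(2*k) * ((2:ℤ)^m - 1) - 4 * (M:ℤ) := by
      rw [hR, ← hGeq, hNZ]
      ring
    have h6 : (g:ℤ) ∣ 2^(2*k) * ((2:ℤ)^m - 1) := by
      have := dvd_add (h5 ▸ h4) (hgZM.mul_left 4)
      simpa using this
    rw [← Int.natCast_dvd_natCast]
    push_cast [Nat.cast_sub (Nat.one_le_two_pow : 1 ≤ 2^m)]
    exact h6
  have hodd : ¬ 2 ∣ g := by
    intro h2g
    have h2M : 2 ∣ M := h2g.trans hgM
    have h2p : 2 ∣ 2^N := dvd_pow_self 2 (by omega)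
    omega
  have hcop : Nat.Coprime g 2 := (Nat.prime_two.coprime_iff_not_dvd.mpr hodd).symm
  have hg3 : g ∣ 2^m - 1 :=
    (Nat.Coprime.pow_right (2*k) hcop).dvd_of_dvd_mul_left hg2
  have hgm : (g:ℤ) ∣ (2:ℤ)^m - 1 := by
    have h := Int.natCast_dvd_natCast.mpr hg3
    rwa [Nat.cast_sub (Nat.one_le_two_pow : 1 ≤ 2^m), Nat.cast_pow, Nat.cast_one, Nat.cast_ofNat] at h
  have hg4 : (g:ℤ) ∣ G - (n:ℤ) := by
    refine hgm.trans ?_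
    have h7 : G - (n:ℤ) = ∑ j ∈ Finset.range n, ((2:ℤ)^(m*j) - 1) := by
      rw [Finset.sum_sub_distrib, hG]
      simp
    rw [h7]
    refine Finset.dvd_sum fun j _ => ?_
    simpa [pow_mul] using sub_dvd_pow_sub_pow ((2:ℤ)^m) 1 j
  have hfin : (g:ℤ) ∣ 4 * ((2:ℤ)^(k-1) - 1)^2 := by
    have h6 : (g:ℤ) ∣ R + 4 * (G - (n:ℤ)) := dvd_add hgR (hg4.mul_left 4)
    have h7 : R + 4 * (G - (n:ℤ)) = 4 * ((2:ℤ)^(k-1) - 1)^2 := by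
      rw [hR, hNZ, hnZ]
      have hk2 : (2:ℤ)^k = 2 * 2^(k-1) := by
        rw [← pow_succ']
        congr 1
        omega
      have h2k : (2:ℤ)^(2*k) = ((2:ℤ)^k)^2 := by rw [← pow_mul, mul_comm]
      rw [h2k, hk2]
      ring
    rwa [h7] at h6
  have hfinN : g ∣ 4 * (2^(k-1) - 1)^2 := by
    rw [← Int.natCast_dvd_natCast]
    push_cast [Nat.cast_sub (Nat.one_le_two_pow : 1 ≤ 2^(k-1))]
    exact hfin
  have hcop4 : Nat.Coprime g 4 := by
    have h := Nat.Coprime.pow_right 2 hcop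
    norm_num at h
    exact h
  exact hcop4.dvd_of_dvd_mul_left hfinN

theorem stmt_18 (k : ℕ) (hk : 2 ≤ k) (N : ℕ) (hN : N = 2 ^ (2 * k) - 1)
    (s : ℕ → ℕ) (hs : ∀ i, s i ≤ 1) (hper : ∀ i, s (i + N) = s i)
    (hauto : ∀ τ, 0 < τ → τ < N →
      ((τ % (2 ^ k + 1) = 0 →
          (∑ i ∈ Finset.range N, (-1 : ℤ) ^ (s i + s ((i + τ) % N))) = -1) ∧
        (τ % (2 ^ k + 1) ≠ 0 →
          (∑ i ∈ Finset.range N, (-1 : ℤ) ^ (s i + s ((i + τ) % N))) = 3))) :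
    Real.logb 2 ((2 ^ N - 1 : ℝ) /
        (Nat.gcd (∑ i ∈ Finset.range N, s i * 2 ^ i) (2 ^ N - 1) : ℝ)) ≥
      Real.logb 2 ((2 : ℝ) ^ N - 1) - 2 * Real.logb 2 ((2 : ℝ) ^ (k - 1) - 1) ∧
    Real.logb 2 ((2 : ℝ) ^ N - 1) - 2 * Real.logb 2 ((2 : ℝ) ^ (k - 1) - 1) >
      ((2 : ℝ) ^ (2 * k) - 1) - 1 - 2 * ((k : ℝ) - 1) ∧
    ((2 : ℝ) ^ (2 * k) - 1) - 1 - 2 * ((k : ℝ) - 1) > (N : ℝ) / 2 := by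
  have hQdvd := key_dvd k N hk hN s hs hauto
  have hk1 : 1 ≤ k - 1 := by omega
  have h2k1 : 2 ≤ 2^(k-1) := by
    calc (2:ℕ) = 2^1 := rfl
    _ ≤ 2^(k-1) := Nat.pow_le_pow_right (by norm_num) hk1
  have ha4 : 4 ≤ 2 ^ k := by
    calc (4:ℕ) = 2^2 := rfl
    _ ≤ 2^k := Nat.pow_le_pow_right (by norm_num) hk
  have hN15 : 15 ≤ N := by
    rw [hN, two_mul, pow_add]
    have := Nat.mul_le_mul ha4 ha4; omega
  set S : ℕ := ∑ i ∈ Finset.range N, s i * 2 ^ i with hS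
  set gN : ℕ := Nat.gcd S (2^N - 1) with hg
  set Q : ℕ := (2^(k-1) - 1)^2 with hQ
  have hQ1 : 1 ≤ Q := by
    have : 1 ≤ 2^(k-1) - 1 := by omega
    calc 1 = 1^2 := rfl
    _ ≤ Q := Nat.pow_le_pow_left this 2
  have hg1 : 1 ≤ gN := Nat.gcd_pos_of_pos_right _ (by
    have : (2:ℕ)^15 ≤ 2^N := Nat.pow_le_pow_right (by norm_num) hN15
    have h215 : (2:ℕ)^15 = 32768 := by norm_num
    omega)
  have hgle : gN ≤ Q := Nat.le_of_dvd (by omega) hQdvd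
  -- real facts
  have hA1 : (1:ℝ) ≤ (2:ℝ)^N - 1 := by
    have : (2:ℝ)^15 ≤ (2:ℝ)^N := pow_le_pow_right₀ (by norm_num) hN15
    norm_num at this ⊢
    linarith
  have hA0 : (0:ℝ) < (2:ℝ)^N - 1 := by linarith
  have hB1 : (1:ℝ) ≤ (2:ℝ)^(k-1) - 1 := by
    have : (2:ℝ)^1 ≤ (2:ℝ)^(k-1) := pow_le_pow_right₀ (by norm_num) hk1
    norm_num at this ⊢
    linarith
  have hB0 : (0:ℝ) < (2:ℝ)^(k-1) - 1 := by linarith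
  have hQR : (Q:ℝ) = ((2:ℝ)^(k-1) - 1)^2 := by
    rw [hQ]
    push_cast [Nat.cast_sub (Nat.one_le_two_pow : 1 ≤ 2^(k-1))]
    ring
  have hgR0 : (0:ℝ) < (gN:ℝ) := by exact_mod_cast hg1
  have hQR0 : (0:ℝ) < (Q:ℝ) := by exact_mod_cast hQ1
  have hgleR : (gN:ℝ) ≤ (Q:ℝ) := by exact_mod_cast hgle
  have hNR : (N:ℝ) = (2:ℝ)^(2*k) - 1 := by
    rw [hN]
    push_cast [Nat.cast_sub (Nat.one_le_two_pow : 1 ≤ 2^(2*k))]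
    ring
  refine ⟨?_, ?_, ?_⟩
  · -- part 1
    have e1 : 2 * Real.logb 2 ((2:ℝ)^(k-1) - 1) = Real.logb 2 (((2:ℝ)^(k-1) - 1)^2) := by
      rw [Real.logb_pow]
      push_cast
      ring
    rw [e1, ← Real.logb_div (by linarith) (by positivity)]
    apply Real.logb_le_logb_of_le (by norm_num)
    · positivity
    · rw [← hQR]
      exact div_le_div_of_nonneg_left (by linarith) hgR0 hgleR
  · -- part 2
    have hlogA : Real.logb 2 ((2:ℝ)^N - 1) > (N:ℝ) - 1 := by
      have h1 : (2:ℝ)^(N-1) < (2:ℝ)^N - 1 := by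
        have e : (2:ℝ)^N = 2 * (2:ℝ)^(N-1) := by
          rw [← pow_succ']
          congr 1
          omega
        have h2 : (2:ℝ)^1 ≤ (2:ℝ)^(N-1) := pow_le_pow_right₀ (by norm_num) (by omega)
        norm_num at h2
        linarith
      have h2 := Real.logb_lt_logb (by norm_num : (1:ℝ) < 2) (by positivity) h1
      rwa [Real.logb_pow, Real.logb_self_eq_one (by norm_num), mul_one,
        Nat.cast_sub (by omega : 1 ≤ N), Nat.cast_one] at h2
    have hlogB : Real.logb 2 ((2:ℝ)^(k-1) - 1) < (k:ℝ) - 1 := by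
      have h1 : (2:ℝ)^(k-1) - 1 < (2:ℝ)^(k-1) := by linarith
      have h2 := Real.logb_lt_logb (by norm_num : (1:ℝ) < 2) hB0 h1
      rwa [Real.logb_pow, Real.logb_self_eq_one (by norm_num), mul_one,
        Nat.cast_sub (by omega : 1 ≤ k), Nat.cast_one] at h2
    rw [← hNR]
    linarith
  · -- part 3
    have h4k : (4:ℝ) * k < (2:ℝ)^(2*k) := by
      have h1 : k < 2^k := Nat.lt_two_pow_self
      have h2 : 4 * k < 4 * 2^k := by omega
      have h3 : (4:ℕ) * 2^k = 2^(k+2) := by ring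
      have h4 : (2:ℕ)^(k+2) ≤ 2^(2*k) := Nat.pow_le_pow_right (by norm_num) (by omega)
      have h5 : 4 * k < 2^(2*k) := by omega
      exact_mod_cast h5
    rw [hNR]
    linarith
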